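/- arXiv:0803.3196 — 2 statements merged into one kernel-verified Lean document; each statement's English description precedes it below -/
import Mathlib

section
/- Let H, H' ⊆ V be linear subspaces. If H ∩ H' = {0}, then [H]·[H'] = [H + H'] in 𝔽₂[V]; if H ∩ H' ≠ {0}, then [H]·[H'] = 0. -/
open AddMonoidAlgebra

/-- The canonical basis element `[v]` of the group algebra `𝔽₂[V]` of the additive group `V`. -/
noncomputable def ga {V : Type*} [AddCommMonoid V] (v : V) :
    AddMonoidAlgebra (ZMod 2) V :=
  AddMonoidAlgebra.single v 1

/-- The fundamental class `[H] = ∑_{v ∈ H} [v] ∈ 𝔽₂[V]` of a linear subspace `H ⊆ V`. -/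
noncomputable def fundClass {V : Type*} [AddCommGroup V] [Module (ZMod 2) V]
    (H : Submodule (ZMod 2) V) : AddMonoidAlgebra (ZMod 2) V :=
  ∑ᶠ v ∈ (H : Set V), ga v

/-- The augmentation map `μ : 𝔽₂[V] → 𝔽₂`, sending each `[v]` to `1`. -/
noncomputable def aug (V : Type*) [AddCommMonoid V] :
    AddMonoidAlgebra (ZMod 2) V →ₐ[ZMod 2] ZMod 2 :=
  AddMonoidAlgebra.lift (ZMod 2) (ZMod 2) V 1

/-- The augmentation ideal `I ⊆ 𝔽₂[V]`, i.e. the kernel of the augmentation map. -/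
noncomputable def augIdeal (V : Type*) [AddCommMonoid V] :
    Ideal (AddMonoidAlgebra (ZMod 2) V) :=
  RingHom.ker (aug V).toRingHom

section Aux

variable {V : Type*} [AddCommGroup V] [Module (ZMod 2) V]

omit [Module (ZMod 2) V] in
lemma ga_mul_ga (v w : V) : ga v * ga w = ga (v + w) := by
  simp [ga, AddMonoidAlgebra.single_mul_single]

lemma fundClass_eq_sum [Finite V] (H : Submodule (ZMod 2) V) :
    fundClass H = ∑ v ∈ (Set.toFinite (H : Set V)).toFinset, ga v :=
  finsum_mem_eq_finite_toFinset_sum _ _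

lemma fundClass_mul_ga [Finite V] (H : Submodule (ZMod 2) V) {w : V} (hw : w ∈ H) :
    fundClass H * ga w = fundClass H := by
  rw [fundClass_eq_sum, Finset.sum_mul]
  simp_rw [ga_mul_ga]
  refine Finset.sum_bijective (· + w) (Equiv.addRight w).bijective (fun v => ?_) (fun v _ => rfl)
  simp only [Set.Finite.mem_toFinset, SetLike.mem_coe]
  constructor
  · exact fun h => H.add_mem h hw
  · intro h
    have := H.sub_mem h hw
    simpa using this

lemma fundClass_mul_of_disjoint [Finite V] (A B : Submodule (ZMod 2) V) (h : A ⊓ B = ⊥) :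
    fundClass A * fundClass B = fundClass (A ⊔ B) := by
  rw [fundClass_eq_sum A, fundClass_eq_sum B, fundClass_eq_sum (A ⊔ B),
    Finset.sum_mul_sum, ← Finset.sum_product']
  refine Finset.sum_bij (fun p _ => p.1 + p.2) ?_ ?_ ?_ ?_
  · rintro ⟨v, w⟩ hp
    simp only [Finset.mem_product, Set.Finite.mem_toFinset, SetLike.mem_coe] at hp ⊢
    exact Submodule.add_mem _ (Submodule.mem_sup_left hp.1) (Submodule.mem_sup_right hp.2)
  · rintro ⟨v₁, w₁⟩ hp ⟨v₂, w₂⟩ hq heq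
    simp only [Finset.mem_product, Set.Finite.mem_toFinset, SetLike.mem_coe] at hp hq
    have hmem : v₁ - v₂ ∈ A ⊓ B := by
      refine ⟨A.sub_mem hp.1 hq.1, ?_⟩
      have : v₁ - v₂ = w₂ - w₁ := by
        rw [sub_eq_sub_iff_add_eq_add]
        dsimp at heq
        rw [heq]; abel
      rw [this]
      exact B.sub_mem hq.2 hp.2
    rw [h, Submodule.mem_bot, sub_eq_zero] at hmem
    have hw : w₁ = w₂ := by
      dsimp at heq
      rw [hmem] at heq
      exact add_left_cancel heq
    exact Prod.ext hmem hw
  · intro u hu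
    simp only [Set.Finite.mem_toFinset, SetLike.mem_coe] at hu
    obtain ⟨v, hv, w, hw, rfl⟩ := Submodule.mem_sup.mp hu
    exact ⟨(v, w), by simp [Finset.mem_product, hv, hw], rfl⟩
  · rintro ⟨v, w⟩ _
    exact ga_mul_ga v w

end Aux

/-- for subspaces `H, H' ⊆ V`, if `H ∩ H' = {0}` then
`[H]·[H'] = [H + H']`, and if `H ∩ H' ≠ {0}` then `[H]·[H'] = 0` in `𝔽₂[V]`. -/
theorem fundClass_mul_fundClass {V : Type*} [AddCommGroup V] [Module (ZMod 2) V]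
    [Module.Finite (ZMod 2) V] (H H' : Submodule (ZMod 2) V) :
    (H ⊓ H' = ⊥ → fundClass H * fundClass H' = fundClass (H ⊔ H')) ∧
    (H ⊓ H' ≠ ⊥ → fundClass H * fundClass H' = 0) := by
  have : Finite V := Module.finite_of_finite (ZMod 2)
  refine ⟨fundClass_mul_of_disjoint H H', ?_⟩
  intro hne
  obtain ⟨a, haK, ha0⟩ := Submodule.exists_mem_ne_zero_of_ne_bot hne
  have haH : a ∈ H := haK.1
  have haH' : a ∈ H' := haK.2
  -- complement of the line through `a` inside `H'`
  set a' : H' := ⟨a, haH'⟩ with ha'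
  obtain ⟨C', hC'⟩ := Submodule.exists_isCompl (Submodule.span (ZMod 2) {a'})
  set L : Submodule (ZMod 2) V := (Submodule.span (ZMod 2) {a'}).map H'.subtype with hL
  set C : Submodule (ZMod 2) V := C'.map H'.subtype with hC
  have hLC_inf : L ⊓ C = ⊥ := by
    rw [hL, hC, ← Submodule.map_inf _ (Submodule.injective_subtype H'),
      hC'.inf_eq_bot, Submodule.map_bot]
  have hLC_sup : L ⊔ C = H' := by
    rw [hL, hC, ← Submodule.map_sup, hC'.sup_eq_top, Submodule.map_top,
      Submodule.range_subtype]
  have hsplit : fundClass H' = fundClass L * fundClass C := by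
    rw [fundClass_mul_of_disjoint L C hLC_inf, hLC_sup]
  -- `L` is the two-element set `{0, a}`
  have hLset : (L : Set V) = {0, a} := by
    ext x
    simp only [hL, Submodule.map_coe, Set.mem_image, SetLike.mem_coe]
    constructor
    · rintro ⟨y, hy, rfl⟩
      rw [Submodule.mem_span_singleton] at hy
      obtain ⟨c, rfl⟩ := hy
      have h01 : ∀ c : ZMod 2, c = 0 ∨ c = 1 := by decide
      rcases h01 c with rfl | rfl
      · simp
      · simp [ha']
    · rintro (rfl | rfl)
      · exact ⟨0, Submodule.zero_mem _, rfl⟩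
      · exact ⟨a', Submodule.mem_span_singleton_self a', rfl⟩
  have hfL : fundClass L = 1 + ga a := by
    rw [fundClass, hLset, finsum_mem_pair (Ne.symm ha0)]
    rw [show (1 : AddMonoidAlgebra (ZMod 2) V) = ga 0 from rfl]
  have hzero : fundClass H * fundClass L = 0 := by
    rw [hfL, mul_add, mul_one, fundClass_mul_ga H haH, ← two_smul (ZMod 2),
      show (2 : ZMod 2) = 0 by decide, zero_smul]
  rw [hsplit, ← mul_assoc, hzero, zero_mul]
end

section
/- If V has dimension n over 𝔽₂, then for every integer q with 0 ≤ q ≤ n the 𝔽₂-vector space I^q/I^{q+1} has dimension equal to the binomial coefficient C(n, q); moreover I^{n+1} = 0. -/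
set_option linter.unusedSectionVars false
set_option maxHeartbeats 1000000
set_option synthInstance.maxHeartbeats 400000

open AddMonoidAlgebra

section Aux

variable {V : Type*} [AddCommGroup V] [Module (ZMod 2) V]

lemma ga_zero : ga (0 : V) = 1 := rfl

lemma ga_add (v w : V) : ga (v + w) = ga v * ga w := by
  simp [ga, AddMonoidAlgebra.single_mul_single]

lemma aug_ga (v : V) : aug V (ga v) = 1 := by
  simp [aug, ga, AddMonoidAlgebra.lift_single]

lemma ga_self_add_self (v : V) : ga v + ga v = 0 := by
  rw [ga, ← AddMonoidAlgebra.single_add]; norm_num; rfl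

lemma ga_sum {ι : Type*} (s : Finset ι) (f : ι → V) :
    ga (∑ i ∈ s, f i) = ∏ i ∈ s, ga (f i) := by
  classical
  induction s using Finset.cons_induction with
  | empty => simp [ga_zero]
  | cons i s hi ih => rw [Finset.sum_cons, Finset.prod_cons, ga_add, ih]

lemma sq_zero (v : V) : (ga v + 1) * (ga v + 1) = 0 := by
  have h2 : ga v * ga v = 1 := by
    rw [← ga_add]
    have : v + v = 0 := by
      have h : v + v = (2 : ZMod 2) • v := by rw [two_smul]
      rw [h, show (2 : ZMod 2) = 0 by decide, zero_smul]
    rw [this, ga_zero]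
  have h3 := ga_self_add_self v
  have h4 : (ga v + 1) * (ga v + 1) = ga v * ga v + (ga v + ga v) + 1 := by ring
  rw [h4, h2, h3]
  have h5 : (1 : AddMonoidAlgebra (ZMod 2) V) + 0 + 1 = ga (0:V) + ga (0:V) := by
    rw [ga_zero]; ring
  rw [h5, ga_self_add_self]

variable {n : ℕ} (b : Module.Basis (Fin n) (ZMod 2) V)

/-- monomial -/
noncomputable def mon (S : Finset (Fin n)) : AddMonoidAlgebra (ZMod 2) V :=
  ∏ i ∈ S, (ga (b i) + 1)

lemma mon_empty : mon b ∅ = 1 := by simp [mon]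

lemma mon_expand (S : Finset (Fin n)) :
    mon b S = ∑ T ∈ S.powerset, ga (∑ i ∈ T, b i) := by
  classical
  rw [mon, Finset.prod_add]
  refine Finset.sum_congr rfl fun T hT => ?_
  rw [ga_sum]; simp

lemma mon_mul_of_disjoint {S T : Finset (Fin n)} (h : Disjoint S T) :
    mon b S * mon b T = mon b (S ∪ T) := by
  rw [mon, mon, mon, ← Finset.prod_union h]

lemma mon_mul_of_not_disjoint {S T : Finset (Fin n)} (h : ¬ Disjoint S T) :
    mon b S * mon b T = 0 := by
  classical
  obtain ⟨i, hiS, hiT⟩ := Finset.not_disjoint_iff.mp h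
  rw [mon, mon, ← Finset.prod_erase_mul _ _ hiS, ← Finset.mul_prod_erase _ _ hiT]
  have : (∏ j ∈ S.erase i, (ga (b j) + 1)) * (ga (b i) + 1) *
      ((ga (b i) + 1) * ∏ j ∈ T.erase i, (ga (b j) + 1)) =
      ((ga (b i) + 1) * (ga (b i) + 1)) *
        ((∏ j ∈ S.erase i, (ga (b j) + 1)) * ∏ j ∈ T.erase i, (ga (b j) + 1)) := by
    ring
  rw [this, sq_zero, zero_mul]

lemma aug_mon {S : Finset (Fin n)} (h : S.Nonempty) : aug V (mon b S) = 0 := by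
  classical
  obtain ⟨i, hi⟩ := h
  rw [mon, ← Finset.mul_prod_erase _ _ hi, map_mul, map_add, aug_ga, map_one]
  norm_num
  exact Or.inl (by decide)

lemma mon_mem_pow (S : Finset (Fin n)) : mon b S ∈ augIdeal V ^ S.card := by
  classical
  induction S using Finset.cons_induction with
  | empty => simp [mon_empty]
  | cons i s hi ih =>
    rw [Finset.card_cons, pow_succ']
    have : mon b (Finset.cons i s hi) = (ga (b i) + 1) * mon b s := by
      rw [mon, mon, Finset.prod_cons]
    rw [this]
    refine Submodule.mul_mem_mul ?_ ih
    show (ga (b i) + 1) ∈ RingHom.ker (aug V).toRingHom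
    rw [RingHom.mem_ker]
    show aug V (ga (b i) + 1) = 0
    rw [map_add, aug_ga, map_one]; norm_num; decide

/-- every group-like element is in the span of monomials -/
lemma ga_sum_mem_span (S : Finset (Fin n)) :
    ga (∑ i ∈ S, b i) ∈ Submodule.span (ZMod 2) (Set.range (mon b)) := by
  classical
  induction S using Finset.strongInduction with
  | _ S ih =>
    have h : ga (∑ i ∈ S, b i) =
        mon b S - ∑ T ∈ S.powerset.erase S, ga (∑ i ∈ T, b i) := by
      rw [mon_expand, ← Finset.add_sum_erase _ _ (Finset.mem_powerset_self S)]
      ring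
    rw [h]
    refine sub_mem (Submodule.subset_span ⟨S, rfl⟩) (Submodule.sum_mem _ fun T hT => ?_)
    rw [Finset.mem_erase, Finset.mem_powerset] at hT
    exact ih T (Finset.ssubset_iff_subset_ne.mpr ⟨hT.2, hT.1⟩)

lemma ga_mem_span (v : V) :
    ga v ∈ Submodule.span (ZMod 2) (Set.range (mon b)) := by
  classical
  have hone : ∀ c : ZMod 2, c ≠ 0 → c = 1 := by decide
  have : v = ∑ i ∈ (b.repr v).support, b i := by
    calc v = ∑ i, b.repr v i • b i := (b.sum_repr v).symm
    _ = ∑ i ∈ (b.repr v).support, b.repr v i • b i :=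
        (Finset.sum_subset (Finset.subset_univ _) (fun i _ hi => by
          rw [Finsupp.notMem_support_iff.mp hi, zero_smul])).symm
    _ = ∑ i ∈ (b.repr v).support, b i := Finset.sum_congr rfl fun i hi => by
          rw [hone _ (Finsupp.mem_support_iff.mp hi), one_smul]
  rw [this]
  exact ga_sum_mem_span b _

lemma span_mon_top : Submodule.span (ZMod 2) (Set.range (mon b)) = ⊤ := by
  classical
  rw [eq_top_iff]
  intro x _
  have : x = ∑ v ∈ x.coeff.support, (x.coeff v) • ga v := by
    conv_lhs => rw [← AddMonoidAlgebra.sum_coeff_single x]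
    rw [Finsupp.sum]
    refine Finset.sum_congr rfl fun v hv => ?_
    rw [ga, AddMonoidAlgebra.smul_single]
    norm_num
  rw [this]
  exact Submodule.sum_mem _ fun v _ => Submodule.smul_mem _ _ (ga_mem_span b v)

end Aux
section Main

variable {V : Type*} [AddCommGroup V] [Module (ZMod 2) V]
variable {n : ℕ} (b : Module.Basis (Fin n) (ZMod 2) V)

/-- the span of monomials with at least q factors -/
noncomputable def spanq (q : ℕ) : Submodule (ZMod 2) (AddMonoidAlgebra (ZMod 2) V) :=
  Submodule.span (ZMod 2) (mon b '' {S | q ≤ S.card})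

lemma spanq_zero : spanq b 0 = ⊤ := by
  rw [spanq]
  have : {S : Finset (Fin n) | 0 ≤ S.card} = Set.univ := by
    ext S; simp
  rw [this, Set.image_univ, span_mon_top]

lemma mul_mem_spanq {q r : ℕ} {x y : AddMonoidAlgebra (ZMod 2) V}
    (hx : x ∈ spanq b q) (hy : y ∈ spanq b r) : x * y ∈ spanq b (q + r) := by
  classical
  induction hx using Submodule.span_induction generalizing y with
  | mem x hx =>
    induction hy using Submodule.span_induction with
    | mem y hy =>
      obtain ⟨S, hS, rfl⟩ := hx
      obtain ⟨T, hT, rfl⟩ := hy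
      by_cases hd : Disjoint S T
      · rw [mon_mul_of_disjoint b hd]
        refine Submodule.subset_span ⟨S ∪ T, ?_, rfl⟩
        rw [Set.mem_setOf_eq, Finset.card_union_of_disjoint hd]
        exact Nat.add_le_add hS hT
      · rw [mon_mul_of_not_disjoint b hd]
        exact zero_mem _
    | zero => rw [mul_zero]; exact zero_mem _
    | add y z hy hz hy' hz' => rw [mul_add]; exact add_mem hy' hz'
    | smul c y hy hy' => rw [mul_smul_comm]; exact Submodule.smul_mem _ _ hy'
  | zero => rw [zero_mul]; exact zero_mem _
  | add x z hx hz hx' hz' => rw [add_mul]; exact add_mem (hx' hy) (hz' hy)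
  | smul c x hx hx' => rw [smul_mul_assoc]; exact Submodule.smul_mem _ _ (hx' hy)

end Main
section Main2

variable {V : Type*} [AddCommGroup V] [Module (ZMod 2) V]
variable {n : ℕ} (b : Module.Basis (Fin n) (ZMod 2) V)

include b in
lemma card_V [Fintype V] : Fintype.card V = 2 ^ n := by
  rw [Fintype.card_congr b.equivFun.toEquiv]
  simp [Fintype.card_fun]

include b in
lemma finrank_A [Fintype V] :
    Module.finrank (ZMod 2) (AddMonoidAlgebra (ZMod 2) V) = 2 ^ n := by
  have B : Module.Basis V (ZMod 2) (AddMonoidAlgebra (ZMod 2) V) := AddMonoidAlgebra.basis V (ZMod 2)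
  rw [Module.finrank_eq_card_basis B]
  exact card_V b

/-- the monomial basis -/
noncomputable def monBasis [Fintype V] :
    Module.Basis (Finset (Fin n)) (ZMod 2) (AddMonoidAlgebra (ZMod 2) V) :=
  basisOfTopLeSpanOfCardEqFinrank (mon b) (span_mon_top b).ge
    (by rw [Fintype.card_finset, Fintype.card_fin, finrank_A b])

lemma monBasis_apply [Fintype V] (S : Finset (Fin n)) : monBasis b S = mon b S := by
  rw [monBasis, coe_basisOfTopLeSpanOfCardEqFinrank]

lemma aug_mon' (S : Finset (Fin n)) :
    aug V (mon b S) = if S = ∅ then 1 else 0 := by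
  classical
  split
  · next h => rw [h, mon_empty, map_one]
  · next h => exact aug_mon b (Finset.nonempty_iff_ne_empty.mpr h)

lemma augIdeal_restrict [Fintype V] :
    Submodule.restrictScalars (ZMod 2) (augIdeal V) = spanq b 1 := by
  classical
  apply le_antisymm
  · intro x hx
    have hker : aug V x = 0 := hx
    set c := (monBasis b).repr x with hc
    have hx2 : x = ∑ S : Finset (Fin n), c S • mon b S := by
      conv_lhs => rw [← (monBasis b).sum_repr x]
      exact Finset.sum_congr rfl fun S _ => by rw [monBasis_apply]
    have haug : aug V x = c ∅ := by
      rw [hx2, map_sum]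
      have : ∀ S : Finset (Fin n), aug V (c S • mon b S)
          = if S = ∅ then c S else 0 := fun S => by
        rw [map_smul, aug_mon' b, smul_eq_mul]
        split <;> simp
      rw [Finset.sum_congr rfl fun S _ => this S, Finset.sum_ite_eq' Finset.univ ∅ c]
      simp
    have hc0 : c ∅ = 0 := by rw [← haug, hker]
    rw [hx2, ← Finset.sum_erase_add _ _ (Finset.mem_univ ∅), hc0]
    rw [zero_smul, add_zero]
    refine Submodule.sum_mem _ fun S hS => ?_
    refine Submodule.smul_mem _ _ (Submodule.subset_span ⟨S, ?_, rfl⟩)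
    rw [Finset.mem_erase] at hS
    simp only [Set.mem_setOf_eq]
    exact Nat.one_le_iff_ne_zero.mpr fun h => hS.1 (Finset.card_eq_zero.mp h)
  · rw [spanq, Submodule.span_le]
    rintro _ ⟨S, hS, rfl⟩
    have := mon_mem_pow b S
    have hle : augIdeal V ^ S.card ≤ augIdeal V ^ 1 :=
      Ideal.pow_le_pow_right hS
    rw [pow_one] at hle
    exact hle this

lemma pow_restrict [Fintype V] (q : ℕ) :
    Submodule.restrictScalars (ZMod 2) (augIdeal V ^ q) = spanq b q := by
  classical
  induction q with
  | zero =>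
    rw [pow_zero, Ideal.one_eq_top, spanq_zero]
    rfl
  | succ q ih =>
    apply le_antisymm
    · intro x hx
      have hx' : x ∈ augIdeal V ^ q * augIdeal V := by rwa [← pow_succ]
      refine Submodule.mul_induction_on hx' (fun a ha c hc => ?_)
        (fun x y hx hy => add_mem hx hy)
      have ha' : a ∈ spanq b q := by rw [← ih]; exact ha
      have hc' : c ∈ spanq b 1 := by rw [← augIdeal_restrict b]; exact hc
      exact mul_mem_spanq b ha' hc'
    · rw [spanq, Submodule.span_le]
      rintro _ ⟨S, hS, rfl⟩
      have := mon_mem_pow b S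
      exact Ideal.pow_le_pow_right hS this

end Main2
section Main3

variable {V : Type*} [AddCommGroup V] [Module (ZMod 2) V]
variable {n : ℕ} (b : Module.Basis (Fin n) (ZMod 2) V)

lemma finrank_spanq [Fintype V] (q : ℕ) :
    Module.finrank (ZMod 2) (spanq b q)
      = (Finset.univ.filter (fun S : Finset (Fin n) => q ≤ S.card)).card := by
  classical
  have hind : LinearIndependent (ZMod 2)
      (fun S : {S : Finset (Fin n) // q ≤ S.card} => mon b (S : Finset (Fin n))) := by
    have h := (monBasis b).linearIndependent.comp
      (fun S : {S : Finset (Fin n) // q ≤ S.card} => (S : Finset (Fin n)))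
      Subtype.val_injective
    have : (fun S : {S : Finset (Fin n) // q ≤ S.card} => mon b (S : Finset (Fin n)))
        = (monBasis b) ∘ (fun S : {S : Finset (Fin n) // q ≤ S.card} => (S : Finset (Fin n))) := by
      funext S; rw [Function.comp_apply, monBasis_apply]
    rw [this]
    exact h
  have himg : mon b '' {S : Finset (Fin n) | q ≤ S.card}
      = Set.range (fun S : {S : Finset (Fin n) // q ≤ S.card} => mon b (S : Finset (Fin n))) :=
    Set.image_eq_range _ _
  rw [spanq, himg, finrank_span_eq_card hind, Fintype.card_subtype]

lemma count_split (q : ℕ) :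
    (Finset.univ.filter (fun S : Finset (Fin n) => q ≤ S.card)).card
      = n.choose q
        + (Finset.univ.filter (fun S : Finset (Fin n) => q + 1 ≤ S.card)).card := by
  classical
  have hsplit : Finset.univ.filter (fun S : Finset (Fin n) => q ≤ S.card)
      = Finset.univ.filter (fun S : Finset (Fin n) => S.card = q)
        ∪ Finset.univ.filter (fun S : Finset (Fin n) => q + 1 ≤ S.card) := by
    ext S
    simp only [Finset.mem_filter, Finset.mem_union, Finset.mem_univ, true_and]
    omega
  have hdisj : Disjoint (Finset.univ.filter (fun S : Finset (Fin n) => S.card = q))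
      (Finset.univ.filter (fun S : Finset (Fin n) => q + 1 ≤ S.card)) := by
    rw [Finset.disjoint_filter]
    intro S _ h
    omega
  have hchoose : (Finset.univ.filter (fun S : Finset (Fin n) => S.card = q)).card
      = n.choose q := by
    have : Finset.univ.filter (fun S : Finset (Fin n) => S.card = q)
        = Finset.powersetCard q Finset.univ := by
      ext S
      simp [Finset.mem_powersetCard, Finset.subset_univ]
    rw [this, Finset.card_powersetCard, Finset.card_univ, Fintype.card_fin]
  rw [hsplit, Finset.card_union_of_disjoint hdisj, hchoose]

lemma spanq_mono (q : ℕ) : spanq b (q + 1) ≤ spanq b q := by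
  apply Submodule.span_mono
  apply Set.image_mono
  intro S hS
  simp only [Set.mem_setOf_eq] at *
  omega

end Main3

/-- if `dim_{𝔽₂} V = n`, then for every `0 ≤ q ≤ n` the graded piece
`I^q/I^{q+1}` (realised as the image of `I^q` in `𝔽₂[V]/I^{q+1}`) has dimension
`C(n, q)` over `𝔽₂`; moreover `I^{n+1} = 0`. -/
theorem finrank_graded_piece_and_pow_eq_bot {V : Type*} [AddCommGroup V]
    [Module (ZMod 2) V] [Module.Finite (ZMod 2) V] (n : ℕ)
    (hn : Module.finrank (ZMod 2) V = n) :
    (∀ q : ℕ, q ≤ n →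
      Module.finrank (ZMod 2)
        (Submodule.map (Submodule.restrictScalars (ZMod 2) (augIdeal V ^ (q + 1))).mkQ
          (Submodule.restrictScalars (ZMod 2) (augIdeal V ^ q))) = n.choose q) ∧
    augIdeal V ^ (n + 1) = ⊥ := by
  classical
  let b : Module.Basis (Fin n) (ZMod 2) V := (Module.finBasis (ZMod 2) V).reindex (finCongr hn)
  haveI : Fintype V := Fintype.ofEquiv _ b.equivFun.toEquiv.symm
  haveI : Module.Finite (ZMod 2) (AddMonoidAlgebra (ZMod 2) V) :=
    Module.Finite.of_basis
      (AddMonoidAlgebra.basis V (ZMod 2) : Module.Basis V (ZMod 2) (AddMonoidAlgebra (ZMod 2) V))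
  have hbot : augIdeal V ^ (n + 1) = ⊥ := by
    have h1 : Submodule.restrictScalars (ZMod 2) (augIdeal V ^ (n + 1)) = ⊥ := by
      rw [pow_restrict b, spanq]
      have : {S : Finset (Fin n) | n + 1 ≤ S.card} = ∅ := by
        ext S
        simp only [Set.mem_setOf_eq, Set.mem_empty_iff_false, iff_false, not_le]
        have := Finset.card_le_univ S
        simp only [Finset.card_univ, Fintype.card_fin] at this
        omega
      rw [this, Set.image_empty, Submodule.span_empty]
    rwa [Submodule.restrictScalars_eq_bot_iff] at h1
  refine ⟨fun q hq => ?_, hbot⟩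
  set p := Submodule.restrictScalars (ZMod 2) (augIdeal V ^ (q + 1)) with hp
  have hp1 : p = spanq b (q + 1) := pow_restrict b (q + 1)
  have hq1 : Submodule.restrictScalars (ZMod 2) (augIdeal V ^ q) = spanq b q :=
    pow_restrict b q
  rw [hq1]
  have hle : p ≤ spanq b q := hp1 ▸ spanq_mono b q
  set f := p.mkQ.comp (spanq b q).subtype with hf
  have hrange : LinearMap.range f = Submodule.map p.mkQ (spanq b q) := by
    rw [hf, LinearMap.range_comp, Submodule.range_subtype]
  have hker : LinearMap.ker f = Submodule.comap (spanq b q).subtype p := by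
    rw [hf, LinearMap.ker_comp, Submodule.ker_mkQ]
  have hrn := LinearMap.finrank_range_add_finrank_ker f
  rw [hrange, hker] at hrn
  have hkerdim : Module.finrank (ZMod 2) (Submodule.comap (spanq b q).subtype p)
      = Module.finrank (ZMod 2) p :=
    (Submodule.comapSubtypeEquivOfLe hle).finrank_eq
  rw [hkerdim] at hrn
  have hd1 : Module.finrank (ZMod 2) p
      = (Finset.univ.filter (fun S : Finset (Fin n) => q + 1 ≤ S.card)).card := by
    rw [hp1]; exact finrank_spanq b (q + 1)
  have hd2 := finrank_spanq b q
  have hc := count_split (n := n) q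
  omega
end
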